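/- The point K₆ = (0, ε, 0) (the mixed non-punishing-cooperator/exiter state, with w = 1 − ε) is an equilibrium of F, and charpoly(J(K₆)) = X · (X − ε(b − 1)) · (X − ε(1 − ε)); in particular, if 0 < ε < 1 then, since b > 1, J(K₆) has the positive real eigenvalue ε(b − 1), so K₆ is linearly unstable. -/

import Mathlib

noncomputable section

open Polynomial

/-- Payoff of altruistic punishers. -/
def PiAP (γ x y z : ℝ) : ℝ := x + y - γ * z

/-- Payoff of non-punishing cooperators. -/
def PiNC (x y : ℝ) : ℝ := x + y

/-- Payoff of defectors. -/
def PiD (b β x y : ℝ) : ℝ := (b - β) * x + b * y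

/-- First component of the reduced replicator vector field. -/
def fRep (b β γ ε x y z : ℝ) : ℝ :=
  x * ((1 - x) * (PiAP γ x y z - ε) - y * (PiNC x y - ε) - z * (PiD b β x y - ε))

/-- Second component of the reduced replicator vector field. -/
def gRep (b β γ ε x y z : ℝ) : ℝ :=
  y * ((1 - y) * (PiNC x y - ε) - x * (PiAP γ x y z - ε) - z * (PiD b β x y - ε))

/-- Third component of the reduced replicator vector field. -/
def hRep (b β γ ε x y z : ℝ) : ℝ :=
  z * ((1 - z) * (PiD b β x y - ε) - y * (PiNC x y - ε) - x * (PiAP γ x y z - ε))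

/-- The reduced replicator vector field `F : ℝ³ → ℝ³`. -/
def Fv (b β γ ε : ℝ) (p : ℝ × ℝ × ℝ) : ℝ × ℝ × ℝ :=
  (fRep b β γ ε p.1 p.2.1 p.2.2,
   gRep b β γ ε p.1 p.2.1 p.2.2,
   hRep b β γ ε p.1 p.2.1 p.2.2)

/-- Partial derivative in the first variable. -/
def pd1 (F : ℝ → ℝ → ℝ → ℝ) (p : ℝ × ℝ × ℝ) : ℝ :=
  deriv (fun x => F x p.2.1 p.2.2) p.1

/-- Partial derivative in the second variable. -/
def pd2 (F : ℝ → ℝ → ℝ → ℝ) (p : ℝ × ℝ × ℝ) : ℝ :=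
  deriv (fun y => F p.1 y p.2.2) p.2.1

/-- Partial derivative in the third variable. -/
def pd3 (F : ℝ → ℝ → ℝ → ℝ) (p : ℝ × ℝ × ℝ) : ℝ :=
  deriv (fun z => F p.1 p.2.1 z) p.2.2

/-- The Jacobian matrix of the reduced replicator vector field at `p`. -/
def Jac (b β γ ε : ℝ) (p : ℝ × ℝ × ℝ) : Matrix (Fin 3) (Fin 3) ℝ :=
  !![pd1 (fRep b β γ ε) p, pd2 (fRep b β γ ε) p, pd3 (fRep b β γ ε) p;
     pd1 (gRep b β γ ε) p, pd2 (gRep b β γ ε) p, pd3 (gRep b β γ ε) p;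
     pd1 (hRep b β γ ε) p, pd2 (hRep b β γ ε) p, pd3 (hRep b β γ ε) p]


lemma deriv_cubic' (a b c d t : ℝ) :
    deriv (fun s : ℝ => a + b*s + c*s^2 + d*s^3) t = b + 2*c*t + 3*d*t^2 := by
  have h : HasDerivAt (fun s : ℝ => a + b*s + c*s^2 + d*s^3)
      (b*1 + c*(2*t^1) + d*(3*t^2)) t := by
    have h1 := (hasDerivAt_id t).const_mul b
    have h2 := (hasDerivAt_pow 2 t).const_mul c
    have h3 := (hasDerivAt_pow 3 t).const_mul d
    exact (((h1.const_add a).add h2).add h3).congr_deriv (by norm_num)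
  rw [h.deriv]; ring

/-- the mixed non-punishing-cooperator/exiter state `K₆ = (0,ε,0)`. -/
theorem K6_equilibrium_charpoly_unstable (b β γ ε : ℝ)
    (hb : 1 < b) (hβ : 0 < β) (hγ : 0 < γ) (hε : ε < 1) :
    Fv b β γ ε (0, ε, 0) = (0, 0, 0) ∧
    (Jac b β γ ε (0, ε, 0)).charpoly =
      X * (X - C (ε * (b - 1))) * (X - C (ε * (1 - ε))) ∧
    (0 < ε →
      0 < ε * (b - 1) ∧ ((Jac b β γ ε (0, ε, 0)).charpoly).IsRoot (ε * (b - 1))) := by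
  have key : ∀ (a c d e t : ℝ) (f : ℝ → ℝ),
      (f = fun s : ℝ => a + c*s + d*s^2 + e*s^3) → deriv f t = c + 2*d*t + 3*e*t^2 := by
    intro a c d e t f hf; rw [hf, deriv_cubic']
  have e11 : pd1 (fRep b β γ ε) (0, ε, 0) = 0 := by
    show deriv (fun x => fRep b β γ ε x ε 0) 0 = 0
    rw [key 0 0 (1-ε) (-1) 0 _ (by funext s; simp [fRep, PiAP, PiNC, PiD]; ring)]; ring
  have e12 : pd2 (fRep b β γ ε) (0, ε, 0) = 0 := by
    show deriv (fun y => fRep b β γ ε 0 y 0) ε = 0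
    rw [key 0 0 0 0 ε _ (by funext s; simp [fRep, PiAP, PiNC, PiD])]; ring
  have e13 : pd3 (fRep b β γ ε) (0, ε, 0) = 0 := by
    show deriv (fun z => fRep b β γ ε 0 ε z) 0 = 0
    rw [key 0 0 0 0 0 _ (by funext s; simp [fRep, PiAP, PiNC, PiD])]; ring
  have e21 : pd1 (gRep b β γ ε) (0, ε, 0) = ε * (1 - ε) := by
    show deriv (fun x => gRep b β γ ε x ε 0) 0 = ε * (1 - ε)
    rw [key 0 (ε*(1-ε)) (-ε) 0 0 _ (by funext s; simp [gRep, PiAP, PiNC, PiD]; ring)]; ring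
  have e22 : pd2 (gRep b β γ ε) (0, ε, 0) = ε * (1 - ε) := by
    show deriv (fun y => gRep b β γ ε 0 y 0) ε = ε * (1 - ε)
    rw [key 0 (-ε) (1+ε) (-1) ε _ (by funext s; simp [gRep, PiAP, PiNC, PiD]; ring)]; ring
  have e23 : pd3 (gRep b β γ ε) (0, ε, 0) = -(ε^2 * (b - 1)) := by
    show deriv (fun z => gRep b β γ ε 0 ε z) 0 = -(ε^2 * (b - 1))
    rw [key 0 (-(ε*(b*ε-ε))) 0 0 0 _ (by funext s; simp [gRep, PiAP, PiNC, PiD]; ring)]; ring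
  have e31 : pd1 (hRep b β γ ε) (0, ε, 0) = 0 := by
    show deriv (fun x => hRep b β γ ε x ε 0) 0 = 0
    rw [key 0 0 0 0 0 _ (by funext s; simp [hRep, PiAP, PiNC, PiD])]; ring
  have e32 : pd2 (hRep b β γ ε) (0, ε, 0) = 0 := by
    show deriv (fun y => hRep b β γ ε 0 y 0) ε = 0
    rw [key 0 0 0 0 ε _ (by funext s; simp [hRep, PiAP, PiNC, PiD])]; ring
  have e33 : pd3 (hRep b β γ ε) (0, ε, 0) = ε * (b - 1) := by
    show deriv (fun z => hRep b β γ ε 0 ε z) 0 = ε * (b - 1)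
    rw [key 0 (ε*(b-1)) (-(ε*(b-1))) 0 0 _ (by funext s; simp [hRep, PiAP, PiNC, PiD]; ring)]; ring
  have hJ : Jac b β γ ε (0, ε, 0) =
      !![0, 0, 0; ε*(1-ε), ε*(1-ε), -(ε^2*(b-1)); 0, 0, ε*(b-1)] := by
    rw [Jac, e11, e12, e13, e21, e22, e23, e31, e32, e33]
  have hcp : (Jac b β γ ε (0, ε, 0)).charpoly =
      X * (X - C (ε * (b - 1))) * (X - C (ε * (1 - ε))) := by
    rw [hJ, Matrix.charpoly, Matrix.det_fin_three]
    simp [Matrix.charmatrix_apply_eq, Matrix.charmatrix_apply_ne, map_mul, map_sub, map_neg,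
      map_pow, map_one]
    ring
  refine ⟨?_, hcp, fun hε0 => ⟨?_, ?_⟩⟩
  · simp [Fv, fRep, gRep, hRep, PiAP, PiNC, PiD]
  · exact mul_pos hε0 (by linarith)
  · rw [hcp]; simp [Polynomial.IsRoot]
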